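/- Under additive valuations, every EFX allocation is an EFL allocation: if for every pair of agents i, j and every good g in A_j with v_i(g) > 0 we have v_i(A_i) ≥ v_i(A_j \ {g}), then for every pair i, j either A_j contains at most one good positively valued by i, or there exists g ∈ A_j with v_i(A_i) ≥ v_i(A_j \ {g}) and v_i(A_i) ≥ v_i({g}). -/
import Mathlib


open Finset

/-- Under additive valuations, every EFX allocation is an EFL allocation. -/
theorem efx_implies_efl {α : Type*} [Fintype α] [DecidableEq α] {n : ℕ}
    (v : Fin n → α → ℝ) (hv : ∀ i g, 0 ≤ v i g)
    (A : Fin n → Finset α)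
    (hEFX : ∀ i j : Fin n, ∀ g ∈ A j, 0 < v i g →
      ∑ h ∈ (A j).erase g, v i h ≤ ∑ h ∈ A i, v i h) :
    ∀ i j : Fin n,
      ((A j).filter (fun g => 0 < v i g)).card ≤ 1 ∨
      ∃ g ∈ A j, (∑ h ∈ (A j).erase g, v i h ≤ ∑ h ∈ A i, v i h) ∧
        v i g ≤ ∑ h ∈ A i, v i h := by
  intro i j
  by_cases hcard : ((A j).filter (fun g => 0 < v i g)).card ≤ 1
  · exact Or.inl hcard
  · right
    push_neg at hcard
    obtain ⟨g, hg, g', hg', hne⟩ := Finset.one_lt_card.mp hcard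
    simp only [Finset.mem_filter] at hg hg'
    refine ⟨g, hg.1, hEFX i j g hg.1 hg.2, ?_⟩
    calc v i g ≤ ∑ h ∈ (A j).erase g', v i h := by
          apply Finset.single_le_sum (fun h _ => hv i h)
          exact Finset.mem_erase.mpr ⟨hne, hg.1⟩
      _ ≤ ∑ h ∈ A i, v i h := hEFX i j g' hg'.1 hg'.2
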